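/- For every positive odd integer n, one has the congruences (aq^2, q^2/a; q^2)_{(n-1)/2} ≡ (-1)^{(n-1)/2} (1-a^n) q^{-(n-1)^2/4} / ((1-a) a^{(n-1)/2}) (mod Φ_n(q)) and (aq, q/a; q^2)_{(n-1)/2} ≡ (-1)^{(n-1)/2} (1-a^n) q^{(1-n^2)/4} / ((1-a) a^{(n-1)/2}) (mod Φ_n(q)), as congruences of rational functions in q and a. -/

import Mathlib

open Finset

noncomputable section

abbrev KK : Type := FractionRing (MvPolynomial (Fin 4) ℚ)
abbrev FF : Type := RatFunc KK

def q : FF := RatFunc.X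
def aK : KK := algebraMap (MvPolynomial (Fin 4) ℚ) KK (MvPolynomial.X 0)
def bK : KK := algebraMap (MvPolynomial (Fin 4) ℚ) KK (MvPolynomial.X 1)
def cK : KK := algebraMap (MvPolynomial (Fin 4) ℚ) KK (MvPolynomial.X 2)
def dK : KK := algebraMap (MvPolynomial (Fin 4) ℚ) KK (MvPolynomial.X 3)
def pa : FF := RatFunc.C aK
def pb : FF := RatFunc.C bK
def pc : FF := RatFunc.C cK
def pd : FF := RatFunc.C dK

/-- q-shifted factorial (x; Q)_m = prod_{j<m} (1 - x Q^j) -/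
def qPoch (x Q : FF) (m : ℕ) : FF := ∏ j ∈ Finset.range m, (1 - x * Q ^ j)

/-- q-integer [m] = (1-q^m)/(1-q) -/
def qInt (m : ℕ) : FF := (1 - q ^ m) / (1 - q)

/-- the polynomial [n] = 1 + q + ... + q^{n-1} -/
def Pn (n : ℕ) : Polynomial KK := ∑ i ∈ Finset.range n, Polynomial.X ^ i

/-- congruence of rational functions modulo a polynomial D:
A - B = D * P / Q with Q coprime to D -/
def modCong (A B : FF) (D : Polynomial KK) : Prop :=
  ∃ P Q : Polynomial KK, IsCoprime Q D ∧
    (A - B) * algebraMap (Polynomial KK) FF Q =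
      algebraMap (Polynomial KK) FF D * algebraMap (Polynomial KK) FF P

set_option maxHeartbeats 1000000
set_option synthInstance.maxHeartbeats 400000



section Helpers

lemma prod_range_two_mul' {M : Type*} [CommMonoid M] (m : ℕ) (g : ℕ → M) :
    ∏ i ∈ Finset.range (2 * m), g i = ∏ j ∈ Finset.range m, (g (2 * j) * g (2 * j + 1)) := by
  induction m with
  | zero => simp
  | succ k ih =>
    rw [show 2 * (k + 1) = (2 * k) + 1 + 1 by ring, Finset.prod_range_succ,
      Finset.prod_range_succ, ih, Finset.prod_range_succ, mul_assoc]

lemma sum_two_mul_succ (m : ℕ) : ∑ j ∈ Finset.range m, 2 * (j + 1) = m * (m + 1) := by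
  induction m with
  | zero => simp
  | succ k ih => rw [Finset.sum_range_succ, ih]; ring

lemma sum_two_mul_add_one (m : ℕ) : ∑ j ∈ Finset.range m, (2 * j + 1) = m * m := by
  induction m with
  | zero => simp
  | succ k ih => rw [Finset.sum_range_succ, ih]; ring

variable {L : Type*} [Field L]

lemma prod_nthRoots_eq_range {n : ℕ} (hpos : 0 < n) {ζ : L} (hζ : IsPrimitiveRoot ζ n)
    (f : L → L) :
    ∏ μ ∈ Polynomial.nthRootsFinset n (1 : L), f μ = ∏ k ∈ Finset.range n, f (ζ ^ k) := by
  haveI : NeZero n := ⟨hpos.ne'⟩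
  refine (Finset.prod_bij (fun k _ => ζ ^ k) ?_ ?_ ?_ ?_).symm
  · intro k _
    rw [Polynomial.mem_nthRootsFinset hpos (1 : L), ← pow_mul, mul_comm, pow_mul, hζ.pow_eq_one,
      one_pow]
  · intro i hi j hj hij
    exact hζ.pow_inj (Finset.mem_range.mp hi) (Finset.mem_range.mp hj) hij
  · intro μ hμ
    obtain ⟨k, hk, hkμ⟩ :=
      hζ.eq_pow_of_pow_eq_one ((Polynomial.mem_nthRootsFinset hpos (1 : L)).mp hμ)
    exact ⟨k, Finset.mem_range.mpr hk, hkμ⟩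
  · intro k _
    rfl

lemma prod_range_sub_pow {n : ℕ} (hpos : 0 < n) {ζ : L} (hζ : IsPrimitiveRoot ζ n) (y : L) :
    ∏ k ∈ Finset.range n, (y - ζ ^ k) = y ^ n - 1 := by
  have h := congrArg (Polynomial.eval y) (Polynomial.X_pow_sub_one_eq_prod hpos hζ)
  rw [← prod_nthRoots_eq_range hpos hζ (fun μ => y - μ)]
  simpa [Polynomial.eval_prod] using h.symm

lemma prim_prod_one_sub {n : ℕ} (hodd : Odd n) (hpos : 0 < n) {ζ : L}
    (hζ : IsPrimitiveRoot ζ n) (x : L) :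
    ∏ k ∈ Finset.range n, (1 - x * ζ ^ k) = 1 - x ^ n := by
  obtain ⟨m, hm⟩ := hodd
  have hζ0 : ζ ≠ 0 := hζ.ne_zero hpos.ne'
  have hterm : ∀ k : ℕ, (1 - x * ζ ^ k) = (-1 * ζ ^ k) * (x - (ζ⁻¹) ^ k) := by
    intro k
    have h : ζ ^ k * (ζ⁻¹) ^ k = 1 := by
      rw [inv_pow, mul_inv_cancel₀ (pow_ne_zero _ hζ0)]
    linear_combination (-1 : L) * h
  have hsum : ζ ^ (∑ k ∈ Finset.range n, k) = 1 := by
    have h2 := Finset.sum_range_id_mul_two n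
    have hs : ∑ k ∈ Finset.range n, k = m * n := by
      have h3 : n * (n - 1) = (m * n) * 2 := by
        subst hm; rw [Nat.add_sub_cancel]; ring
      omega
    rw [hs, pow_mul', hζ.pow_eq_one, one_pow]
  calc ∏ k ∈ Finset.range n, (1 - x * ζ ^ k)
      = ∏ k ∈ Finset.range n, ((-1 * ζ ^ k) * (x - (ζ⁻¹) ^ k)) :=
        Finset.prod_congr rfl fun k _ => hterm k
    _ = ((∏ _k ∈ Finset.range n, (-1 : L)) * ∏ k ∈ Finset.range n, ζ ^ k) *
          ∏ k ∈ Finset.range n, (x - (ζ⁻¹) ^ k) := by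
        rw [Finset.prod_mul_distrib, Finset.prod_mul_distrib]
    _ = ((-1) ^ n * ζ ^ (∑ k ∈ Finset.range n, k)) * (x ^ n - 1) := by
        rw [Finset.prod_const, Finset.card_range, Finset.prod_pow_eq_pow_sum,
          prod_range_sub_pow hpos hζ.inv x]
    _ = 1 - x ^ n := by
        rw [hsum, (show n = 2 * m + 1 by omega), pow_succ, pow_mul]
        ring

end Helpers

section Vanish

variable {L : Type*} [Field L]

lemma flipT (m : ℕ) {ζ α : L} (hζ : IsPrimitiveRoot ζ (2 * m + 1)) (hα : α ≠ 0)
    (e : ℕ → ℕ) (he : ∀ j, j < m → e j ≤ 2 * m) :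
    α ^ m * ∏ j ∈ Finset.range m, (1 - α⁻¹ * ζ ^ (e j)) =
      (-1) ^ m * ζ ^ (∑ j ∈ Finset.range m, e j) *
        ∏ j ∈ Finset.range m, (1 - α * ζ ^ (2 * m + 1 - e j)) := by
  have ha : α * α⁻¹ = 1 := mul_inv_cancel₀ hα
  have h1 : α ^ m * ∏ j ∈ Finset.range m, (1 - α⁻¹ * ζ ^ (e j)) =
      ∏ j ∈ Finset.range m, (α * (1 - α⁻¹ * ζ ^ (e j))) := by
    rw [Finset.prod_mul_distrib, Finset.prod_const, Finset.card_range]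
  rw [h1]
  have h2 : ∀ j ∈ Finset.range m,
      α * (1 - α⁻¹ * ζ ^ (e j)) = (-1 * ζ ^ (e j)) * (1 - α * ζ ^ (2 * m + 1 - e j)) := by
    intro j hj
    have hj' := Finset.mem_range.mp hj
    have hb : ζ ^ (e j) * ζ ^ (2 * m + 1 - e j) = 1 := by
      rw [← pow_add, show e j + (2 * m + 1 - e j) = 2 * m + 1 from by
        have := he j hj'; omega, hζ.pow_eq_one]
    linear_combination (-α) * hb + (-(ζ ^ (e j))) * ha
  rw [Finset.prod_congr rfl h2, Finset.prod_mul_distrib, Finset.prod_mul_distrib,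
    Finset.prod_const, Finset.card_range, Finset.prod_pow_eq_pow_sum]

lemma vanish1 (m : ℕ) {ζ α : L} (hζ : IsPrimitiveRoot ζ (2 * m + 1)) (hα : α ≠ 0) :
    ζ ^ (m * m) * ((1 - α) * α ^ m) *
        ∏ j ∈ Finset.range m, ((1 - α * ζ ^ (2 * (j + 1))) * (1 - α⁻¹ * ζ ^ (2 * (j + 1)))) =
      (-1) ^ m * (1 - α ^ (2 * m + 1)) := by
  have hodd : Odd (2 * m + 1) := ⟨m, by ring⟩
  have hpos : 0 < 2 * m + 1 := by omega
  have hT := flipT m hζ hα (fun j => 2 * (j + 1)) (fun j hj => show 2 * (j + 1) ≤ 2 * m by omega)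
  have hrefl : ∏ j ∈ Finset.range m, (1 - α * ζ ^ (2 * m + 1 - 2 * (j + 1))) =
      ∏ j ∈ Finset.range m, (1 - α * ζ ^ (2 * j + 1)) := by
    rw [← Finset.prod_range_reflect (fun j => 1 - α * ζ ^ (2 * j + 1)) m]
    refine Finset.prod_congr rfl fun j hj => ?_
    have hj' := Finset.mem_range.mp hj
    rw [show 2 * m + 1 - 2 * (j + 1) = 2 * (m - 1 - j) + 1 from by omega]
  rw [hrefl, sum_two_mul_succ] at hT
  rw [Finset.prod_mul_distrib]
  set PA := ∏ j ∈ Finset.range m, (1 - α * ζ ^ (2 * (j + 1))) with hPA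
  set PB := ∏ j ∈ Finset.range m, (1 - α⁻¹ * ζ ^ (2 * (j + 1))) with hPB
  set PO := ∏ j ∈ Finset.range m, (1 - α * ζ ^ (2 * j + 1)) with hPO
  have hSO : PO * PA = ∏ i ∈ Finset.range (2 * m), (1 - α * ζ ^ (i + 1)) := by
    rw [prod_range_two_mul' m (fun i => 1 - α * ζ ^ (i + 1)), Finset.prod_mul_distrib]
    congr 1
  have hfull : (1 - α) * ∏ i ∈ Finset.range (2 * m), (1 - α * ζ ^ (i + 1)) =
      1 - α ^ (2 * m + 1) := by
    have h := prim_prod_one_sub hodd hpos hζ α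
    rw [Finset.prod_range_succ', pow_zero, mul_one] at h
    rw [mul_comm]
    exact h
  have hone : ζ ^ (m * m) * ζ ^ (m * (m + 1)) = 1 := by
    rw [← pow_add, show m * m + m * (m + 1) = (2 * m + 1) * m from by ring, pow_mul,
      hζ.pow_eq_one, one_pow]
  calc ζ ^ (m * m) * ((1 - α) * α ^ m) * (PA * PB)
      = ζ ^ (m * m) * (1 - α) * PA * (α ^ m * PB) := by ring
    _ = ζ ^ (m * m) * (1 - α) * PA * ((-1) ^ m * ζ ^ (m * (m + 1)) * PO) := by rw [hT]
    _ = (-1) ^ m * (ζ ^ (m * m) * ζ ^ (m * (m + 1))) * ((1 - α) * (PO * PA)) := by ring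
    _ = (-1) ^ m * (1 - α ^ (2 * m + 1)) := by rw [hSO, hone, hfull, mul_one]

lemma vanish2 (m : ℕ) {ζ α : L} (hζ : IsPrimitiveRoot ζ (2 * m + 1)) (hα : α ≠ 0) :
    ζ ^ (m * (m + 1)) * ((1 - α) * α ^ m) *
        ∏ j ∈ Finset.range m, ((1 - α * ζ ^ (2 * j + 1)) * (1 - α⁻¹ * ζ ^ (2 * j + 1))) =
      (-1) ^ m * (1 - α ^ (2 * m + 1)) := by
  have hodd : Odd (2 * m + 1) := ⟨m, by ring⟩
  have hpos : 0 < 2 * m + 1 := by omega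
  have hT := flipT m hζ hα (fun j => 2 * j + 1) (fun j hj => show 2 * j + 1 ≤ 2 * m by omega)
  have hrefl : ∏ j ∈ Finset.range m, (1 - α * ζ ^ (2 * m + 1 - (2 * j + 1))) =
      ∏ j ∈ Finset.range m, (1 - α * ζ ^ (2 * (j + 1))) := by
    rw [← Finset.prod_range_reflect (fun j => 1 - α * ζ ^ (2 * (j + 1))) m]
    refine Finset.prod_congr rfl fun j hj => ?_
    have hj' := Finset.mem_range.mp hj
    rw [show 2 * m + 1 - (2 * j + 1) = 2 * (m - 1 - j + 1) from by omega]
  rw [hrefl, sum_two_mul_add_one] at hT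
  rw [Finset.prod_mul_distrib]
  set PA := ∏ j ∈ Finset.range m, (1 - α * ζ ^ (2 * (j + 1))) with hPA
  set PO := ∏ j ∈ Finset.range m, (1 - α * ζ ^ (2 * j + 1)) with hPO
  set PB := ∏ j ∈ Finset.range m, (1 - α⁻¹ * ζ ^ (2 * j + 1)) with hPB
  have hSO : PO * PA = ∏ i ∈ Finset.range (2 * m), (1 - α * ζ ^ (i + 1)) := by
    rw [prod_range_two_mul' m (fun i => 1 - α * ζ ^ (i + 1)), Finset.prod_mul_distrib]
    congr 1
  have hfull : (1 - α) * ∏ i ∈ Finset.range (2 * m), (1 - α * ζ ^ (i + 1)) =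
      1 - α ^ (2 * m + 1) := by
    have h := prim_prod_one_sub hodd hpos hζ α
    rw [Finset.prod_range_succ', pow_zero, mul_one] at h
    rw [mul_comm]
    exact h
  have hone : ζ ^ (m * (m + 1)) * ζ ^ (m * m) = 1 := by
    rw [← pow_add, show m * (m + 1) + m * m = (2 * m + 1) * m from by ring, pow_mul,
      hζ.pow_eq_one, one_pow]
  calc ζ ^ (m * (m + 1)) * ((1 - α) * α ^ m) * (PO * PB)
      = ζ ^ (m * (m + 1)) * (1 - α) * PO * (α ^ m * PB) := by ring
    _ = ζ ^ (m * (m + 1)) * (1 - α) * PO * ((-1) ^ m * ζ ^ (m * m) * PA) := by rw [hT]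
    _ = (-1) ^ m * (ζ ^ (m * (m + 1)) * ζ ^ (m * m)) * ((1 - α) * (PO * PA)) := by ring
    _ = (-1) ^ m * (1 - α ^ (2 * m + 1)) := by rw [hSO, hone, hfull, mul_one]

end Vanish

section Facts

lemma aK_ne_zero : aK ≠ 0 := by
  intro h
  have hinj := IsFractionRing.injective (MvPolynomial (Fin 4) ℚ) KK
  have : (MvPolynomial.X 0 : MvPolynomial (Fin 4) ℚ) = 0 := hinj (by simpa [aK] using h)
  exact MvPolynomial.X_ne_zero 0 this

lemma aK_pow_ne_one (n : ℕ) (hn : 0 < n) : aK ^ n ≠ 1 := by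
  intro h
  have hinj := IsFractionRing.injective (MvPolynomial (Fin 4) ℚ) KK
  have h2 : ((MvPolynomial.X 0 : MvPolynomial (Fin 4) ℚ)) ^ n = 1 := by
    apply hinj
    rw [map_pow, map_one]
    simpa [aK] using h
  have h3 := congrArg (MvPolynomial.eval (fun _ => (0 : ℚ))) h2
  simp [zero_pow hn.ne'] at h3

lemma one_sub_aK_ne_zero : 1 - aK ≠ 0 := by
  intro h
  have : aK = 1 := by linear_combination -h
  exact aK_pow_ne_one 1 one_pos (by rw [pow_one, this])

lemma one_sub_aK_pow_ne_zero (n : ℕ) (hn : 0 < n) : 1 - aK ^ n ≠ 0 := by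
  intro h
  exact aK_pow_ne_one n hn (by linear_combination -h)

end Facts

section Dvd

lemma dvd_main (m t : ℕ) (ht : 0 < t) (e : ℕ → ℕ)
    (hvan : ∀ (L : Type) [Field L], ∀ ζ α : L, IsPrimitiveRoot ζ (2 * m + 1) → α ≠ 0 →
      ζ ^ t * ((1 - α) * α ^ m) *
          ∏ j ∈ Finset.range m, ((1 - α * ζ ^ (e j)) * (1 - α⁻¹ * ζ ^ (e j))) =
        (-1) ^ m * (1 - α ^ (2 * m + 1))) :
    Polynomial.cyclotomic (2 * m + 1) KK ∣
      (Polynomial.X ^ t * Polynomial.C ((1 - aK) * aK ^ m) *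
          ∏ j ∈ Finset.range m, ((1 - Polynomial.C aK * Polynomial.X ^ (e j)) *
            (1 - Polynomial.C aK⁻¹ * Polynomial.X ^ (e j))) -
        Polynomial.C ((-1) ^ m * (1 - aK ^ (2 * m + 1)))) := by
  set n := 2 * m + 1 with hn
  have hnpos : 0 < n := by omega
  set L := AlgebraicClosure KK with hL
  have hinj : Function.Injective (algebraMap KK L) := (algebraMap KK L).injective
  haveI : CharZero L := charZero_of_injective_algebraMap hinj
  haveI : NeZero ((n : ℕ) : L) := ⟨Nat.cast_ne_zero.mpr hnpos.ne'⟩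
  set G : Polynomial KK :=
      Polynomial.X ^ t * Polynomial.C ((1 - aK) * aK ^ m) *
          ∏ j ∈ Finset.range m, ((1 - Polynomial.C aK * Polynomial.X ^ (e j)) *
            (1 - Polynomial.C aK⁻¹ * Polynomial.X ^ (e j))) -
        Polynomial.C ((-1) ^ m * (1 - aK ^ n)) with hG
  classical
  have hGne : G ≠ 0 := by
    intro h0
    have hev : G.eval 0 = -((-1 : KK) ^ m * (1 - aK ^ n)) := by
      rw [hG]
      simp [zero_pow ht.ne']
    rw [h0, Polynomial.eval_zero] at hev
    have h3 : ((-1 : KK)) ^ m * (1 - aK ^ n) = 0 := by linear_combination hev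
    rcases mul_eq_zero.mp h3 with h4 | h4
    · exact pow_ne_zero m (by norm_num : (-1 : KK) ≠ 0) h4
    · exact one_sub_aK_pow_ne_zero n hnpos h4
  rw [← Polynomial.map_dvd_map (algebraMap KK L) hinj (Polynomial.cyclotomic.monic n KK),
    Polynomial.map_cyclotomic]
  have hGmapne : G.map (algebraMap KK L) ≠ 0 := Polynomial.map_ne_zero hGne
  have hsplits : (Polynomial.cyclotomic n L).Splits :=
    IsAlgClosed.splits _
  refine hsplits.dvd_of_roots_le_roots (Polynomial.cyclotomic_ne_zero n L) ?_
  refine Multiset.le_iff_count.mpr fun a => ?_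
  by_cases ha : a ∈ (Polynomial.cyclotomic n L).roots
  · have h1 : (Polynomial.cyclotomic n L).roots.count a = 1 :=
      Multiset.count_eq_one_of_mem (Polynomial.roots_cyclotomic_nodup) ha
    rw [h1]
    refine Multiset.one_le_count_iff_mem.mpr ?_
    rw [Polynomial.mem_roots hGmapne]
    have hprim : IsPrimitiveRoot a n :=
      Polynomial.isRoot_cyclotomic_iff.mp
        ((Polynomial.mem_roots (Polynomial.cyclotomic_ne_zero n L)).mp ha)
    have hα : (algebraMap KK L) aK ≠ 0 := fun h => aK_ne_zero (hinj (by simpa using h))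
    have hv := hvan L a ((algebraMap KK L) aK) hprim hα
    show (G.map (algebraMap KK L)).IsRoot a
    rw [Polynomial.IsRoot.def, hG]
    simp only [Polynomial.map_sub, Polynomial.map_mul, Polynomial.map_pow,
      Polynomial.map_prod, Polynomial.map_one, Polynomial.map_X, Polynomial.map_C,
      Polynomial.eval_sub, Polynomial.eval_mul, Polynomial.eval_pow, Polynomial.eval_prod,
      Polynomial.eval_one, Polynomial.eval_X, Polynomial.eval_C,
      Polynomial.map_neg, Polynomial.eval_neg,
      map_mul, map_sub, map_pow, map_one, map_inv₀, map_neg]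
    rw [sub_eq_zero]
    linear_combination hv
  · simp [Multiset.count_eq_zero_of_notMem ha]

end Dvd

section Bridge

lemma modCong_of (m t : ℕ) (e : ℕ → ℕ) (A B : FF)
    (hA : A = algebraMap (Polynomial KK) FF (∏ j ∈ Finset.range m,
        ((1 - Polynomial.C aK * Polynomial.X ^ (e j)) *
          (1 - Polynomial.C aK⁻¹ * Polynomial.X ^ (e j)))))
    (hB : B * algebraMap (Polynomial KK) FF
          (Polynomial.X ^ t * Polynomial.C ((1 - aK) * aK ^ m)) =
        algebraMap (Polynomial KK) FF (Polynomial.C ((-1) ^ m * (1 - aK ^ (2 * m + 1)))))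
    (hdvd : Polynomial.cyclotomic (2 * m + 1) KK ∣
      (Polynomial.X ^ t * Polynomial.C ((1 - aK) * aK ^ m) *
          ∏ j ∈ Finset.range m, ((1 - Polynomial.C aK * Polynomial.X ^ (e j)) *
            (1 - Polynomial.C aK⁻¹ * Polynomial.X ^ (e j))) -
        Polynomial.C ((-1) ^ m * (1 - aK ^ (2 * m + 1))))) :
    modCong A B (Polynomial.cyclotomic (2 * m + 1) KK) := by
  obtain ⟨P, hP⟩ := hdvd
  have hc : ((1 - aK) * aK ^ m) ≠ 0 :=
    mul_ne_zero one_sub_aK_ne_zero (pow_ne_zero _ aK_ne_zero)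
  refine ⟨P, Polynomial.X ^ t * Polynomial.C ((1 - aK) * aK ^ m), ?_, ?_⟩
  · have hXD : IsCoprime (Polynomial.X : Polynomial KK)
        (Polynomial.cyclotomic (2 * m + 1) KK) := by
      refine (Polynomial.irreducible_X).coprime_iff_not_dvd.mpr fun hdvd' => ?_
      have h2 : (Polynomial.X : Polynomial KK) ∣ (Polynomial.X ^ (2 * m + 1) - 1) :=
        hdvd'.trans (Polynomial.cyclotomic.dvd_X_pow_sub_one (2 * m + 1) KK)
      rw [Polynomial.X_dvd_iff] at h2
      simp [Polynomial.coeff_X_pow] at h2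
    refine IsCoprime.mul_left (hXD.pow_left) ?_
    exact ⟨Polynomial.C (((1 - aK) * aK ^ m)⁻¹), 0, by
      rw [zero_mul, add_zero, ← Polynomial.C_mul, inv_mul_cancel₀ hc, Polynomial.C_1]⟩
  · rw [sub_mul, hA, hB, ← map_mul, ← map_sub, ← map_mul]
    congr 1
    rw [← hP]
    ring

lemma one_sub_pa_ne_zero : (1 : FF) - pa ≠ 0 := by
  intro h
  apply one_sub_aK_ne_zero
  apply RingHom.injective (RatFunc.C : KK →+* FF)
  rw [map_sub, map_one, map_zero]
  exact h

lemma pa_ne_zero : pa ≠ 0 := by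
  intro h
  apply aK_ne_zero
  apply RingHom.injective (RatFunc.C : KK →+* FF)
  rw [map_zero]
  exact h

lemma q_ne_zero : q ≠ 0 := RatFunc.X_ne_zero

lemma hB_calc (m t : ℕ) :
    ((-1 : FF) ^ m * (1 - pa ^ (2 * m + 1)) * q ^ (-((t : ℕ) : ℤ)) / ((1 - pa) * pa ^ m)) *
        algebraMap (Polynomial KK) FF
          (Polynomial.X ^ t * Polynomial.C ((1 - aK) * aK ^ m)) =
      algebraMap (Polynomial KK) FF (Polynomial.C ((-1) ^ m * (1 - aK ^ (2 * m + 1)))) := by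
  have halg : algebraMap (Polynomial KK) FF
      (Polynomial.X ^ t * Polynomial.C ((1 - aK) * aK ^ m)) =
      q ^ t * ((1 - pa) * pa ^ m) := by
    rw [map_mul, map_pow, RatFunc.algebraMap_X, RatFunc.algebraMap_C, map_mul, map_sub,
      map_one, map_pow]
    rfl
  have halg2 : algebraMap (Polynomial KK) FF
      (Polynomial.C ((-1) ^ m * (1 - aK ^ (2 * m + 1)))) =
      (-1 : FF) ^ m * (1 - pa ^ (2 * m + 1)) := by
    rw [RatFunc.algebraMap_C, map_mul, map_sub, map_one, map_pow, map_pow, map_neg, map_one]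
    rfl
  rw [halg, halg2, zpow_neg, zpow_natCast]
  have hd : (1 - pa) * pa ^ m ≠ 0 :=
    mul_ne_zero one_sub_pa_ne_zero (pow_ne_zero _ pa_ne_zero)
  have hq : (q : FF) ^ t ≠ 0 := pow_ne_zero _ q_ne_zero
  field_simp
  rw [mul_assoc, mul_div_cancel_right₀ _ hd]

end Bridge

section Aparts

lemma hA1 (m : ℕ) :
    qPoch (pa * q ^ 2) (q ^ 2) m * qPoch (q ^ 2 / pa) (q ^ 2) m =
      algebraMap (Polynomial KK) FF (∏ j ∈ Finset.range m,
        ((1 - Polynomial.C aK * Polynomial.X ^ (2 * (j + 1))) *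
          (1 - Polynomial.C aK⁻¹ * Polynomial.X ^ (2 * (j + 1))))) := by
  rw [qPoch, qPoch, ← Finset.prod_mul_distrib, map_prod]
  refine Finset.prod_congr rfl fun j _ => ?_
  simp only [map_mul, map_sub, map_pow, map_one, RatFunc.algebraMap_C,
    RatFunc.algebraMap_X]
  have hq : (q : FF) ^ 2 * (q ^ 2) ^ j = q ^ (2 * (j + 1)) := by
    rw [← pow_mul, ← pow_add]
    congr 1
    ring
  rw [show (RatFunc.X : FF) = q from rfl, show RatFunc.C aK = pa from rfl,
    map_inv₀ (RatFunc.C : KK →+* FF), show RatFunc.C aK = pa from rfl, ← hq]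
  ring

lemma hA2 (m : ℕ) :
    qPoch (pa * q) (q ^ 2) m * qPoch (q / pa) (q ^ 2) m =
      algebraMap (Polynomial KK) FF (∏ j ∈ Finset.range m,
        ((1 - Polynomial.C aK * Polynomial.X ^ (2 * j + 1)) *
          (1 - Polynomial.C aK⁻¹ * Polynomial.X ^ (2 * j + 1)))) := by
  rw [qPoch, qPoch, ← Finset.prod_mul_distrib, map_prod]
  refine Finset.prod_congr rfl fun j _ => ?_
  simp only [map_mul, map_sub, map_pow, map_one, RatFunc.algebraMap_C,
    RatFunc.algebraMap_X]
  have hq : (q : FF) * (q ^ 2) ^ j = q ^ (2 * j + 1) := by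
    rw [← pow_mul, ← pow_succ']
  rw [show (RatFunc.X : FF) = q from rfl, show RatFunc.C aK = pa from rfl,
    map_inv₀ (RatFunc.C : KK →+* FF), show RatFunc.C aK = pa from rfl, ← hq]
  ring

end Aparts


theorem stmt9 (n : ℕ) (hn : 0 < n) (hodd : Odd n) :
    modCong
      (qPoch (pa * q ^ 2) (q ^ 2) ((n - 1) / 2) * qPoch (q ^ 2 / pa) (q ^ 2) ((n - 1) / 2))
      ((-1 : FF) ^ ((n - 1) / 2) * (1 - pa ^ n) * q ^ (-(((n : ℤ) - 1) ^ 2 / 4)) /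
        ((1 - pa) * pa ^ ((n - 1) / 2)))
      (Polynomial.cyclotomic n KK) ∧
    modCong
      (qPoch (pa * q) (q ^ 2) ((n - 1) / 2) * qPoch (q / pa) (q ^ 2) ((n - 1) / 2))
      ((-1 : FF) ^ ((n - 1) / 2) * (1 - pa ^ n) * q ^ ((1 - (n : ℤ) ^ 2) / 4) /
        ((1 - pa) * pa ^ ((n - 1) / 2)))
      (Polynomial.cyclotomic n KK) := by
  obtain ⟨m, hm⟩ := hodd
  subst hm
  have hhalf : (2 * m + 1 - 1) / 2 = m := by omega
  have he1 : -((((2 * m + 1 : ℕ) : ℤ) - 1) ^ 2 / 4) = -((m * m : ℕ) : ℤ) := by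
    have h4 : ((((2 * m + 1 : ℕ) : ℤ)) - 1) ^ 2 = 4 * ((m * m : ℕ) : ℤ) := by
      push_cast; ring
    rw [h4, Int.mul_ediv_cancel_left _ (by norm_num)]
  have he2 : (1 - ((2 * m + 1 : ℕ) : ℤ) ^ 2) / 4 = -((m * (m + 1) : ℕ) : ℤ) := by
    have h5 : (1 - (((2 * m + 1 : ℕ)) : ℤ) ^ 2) = 4 * (-((m * (m + 1) : ℕ) : ℤ)) := by
      push_cast; ring
    rw [h5, Int.mul_ediv_cancel_left _ (by norm_num)]
  rw [hhalf, he1, he2]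
  rcases Nat.eq_zero_or_pos m with rfl | hmpos
  · constructor
    all_goals refine ⟨0, 1, isCoprime_one_left, ?_⟩
    all_goals simp only [map_one, map_zero, mul_one, mul_zero]
    all_goals rw [sub_eq_zero]
    all_goals simp [qPoch]
    all_goals (exact (div_self one_sub_pa_ne_zero).symm)
  constructor
  · exact modCong_of m (m * m) (fun j => 2 * (j + 1)) _ _ (hA1 m) (hB_calc m (m * m))
      (dvd_main m (m * m) (Nat.mul_pos hmpos hmpos) (fun j => 2 * (j + 1))
        (fun L _ ζ α hζ hα => vanish1 m hζ hα))
  · exact modCong_of m (m * (m + 1)) (fun j => 2 * j + 1) _ _ (hA2 m)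
      (hB_calc m (m * (m + 1)))
      (dvd_main m (m * (m + 1)) (Nat.mul_pos hmpos (by omega)) (fun j => 2 * j + 1)
        (fun L _ ζ α hζ hα => vanish2 m hζ hα))
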